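/- Let (A, V, ψ, σ) be a quadruple where ψ : V ⊗ A → A ⊗ V satisfies the multiplicativity condition, and suppose the twisted condition (μ_A ⊗ V) ∘ (A ⊗ ψ) ∘ (σ ⊗ A) = (μ_A ⊗ V) ∘ (A ⊗ σ) ∘ (ψ ⊗ V) ∘ (V ⊗ ψ) and the cocycle condition (μ_A ⊗ V) ∘ (A ⊗ σ) ∘ (σ ⊗ V) = (μ_A ⊗ V) ∘ (A ⊗ σ) ∘ (ψ ⊗ V) ∘ (V ⊗ σ) hold, and that ∇ ∘ σ = σ for the associated idempotent ∇. Then the product μ_{A⊗V} = (μ_A ⊗ V) ∘ (μ_A ⊗ σ) ∘ (A ⊗ ψ ⊗ V) on A ⊗ V is associative. -/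
import Mathlib


open TensorProduct

variable {R A V : Type*} [CommRing R] [Ring A] [Algebra R A]
  [AddCommGroup V] [Module R V]

/-- (μ_A ⊗ V) ∘ (A ⊗ ψ) ∘ (ψ ⊗ A) : (V ⊗ A) ⊗ A → A ⊗ V -/
noncomputable def psiMulLHS (ψ : V ⊗[R] A →ₗ[R] A ⊗[R] V) :
    (V ⊗[R] A) ⊗[R] A →ₗ[R] A ⊗[R] V :=
  TensorProduct.map (LinearMap.mul' R A) LinearMap.id
    ∘ₗ (TensorProduct.assoc R A A V).symm.toLinearMap
    ∘ₗ LinearMap.lTensor A ψ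
    ∘ₗ (TensorProduct.assoc R A V A).toLinearMap
    ∘ₗ LinearMap.rTensor A ψ

/-- ψ ∘ (V ⊗ μ_A) : (V ⊗ A) ⊗ A → A ⊗ V -/
noncomputable def psiMulRHS (ψ : V ⊗[R] A →ₗ[R] A ⊗[R] V) :
    (V ⊗[R] A) ⊗[R] A →ₗ[R] A ⊗[R] V :=
  ψ ∘ₗ LinearMap.lTensor V (LinearMap.mul' R A)
    ∘ₗ (TensorProduct.assoc R V A A).toLinearMap

/-- ∇ = (μ_A ⊗ V) ∘ (A ⊗ ψ) ∘ (A ⊗ V ⊗ η_A) : A ⊗ V → A ⊗ V -/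
noncomputable def nabla (ψ : V ⊗[R] A →ₗ[R] A ⊗[R] V) :
    A ⊗[R] V →ₗ[R] A ⊗[R] V :=
  TensorProduct.map (LinearMap.mul' R A) LinearMap.id
    ∘ₗ (TensorProduct.assoc R A A V).symm.toLinearMap
    ∘ₗ LinearMap.lTensor A ψ
    ∘ₗ LinearMap.lTensor A ((TensorProduct.mk R V A).flip 1)


/-- Twisted condition LHS: (μ_A ⊗ V) ∘ (A ⊗ ψ) ∘ (σ ⊗ A) : (V ⊗ V) ⊗ A → A ⊗ V. -/
noncomputable def twistedLHS (ψ : V ⊗[R] A →ₗ[R] A ⊗[R] V)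
    (σ : V ⊗[R] V →ₗ[R] A ⊗[R] V) : (V ⊗[R] V) ⊗[R] A →ₗ[R] A ⊗[R] V :=
  TensorProduct.map (LinearMap.mul' R A) LinearMap.id
    ∘ₗ (TensorProduct.assoc R A A V).symm.toLinearMap
    ∘ₗ LinearMap.lTensor A ψ
    ∘ₗ (TensorProduct.assoc R A V A).toLinearMap
    ∘ₗ LinearMap.rTensor A σ

/-- Twisted condition RHS: (μ_A ⊗ V) ∘ (A ⊗ σ) ∘ (ψ ⊗ V) ∘ (V ⊗ ψ) : V ⊗ (V ⊗ A) → A ⊗ V. -/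
noncomputable def twistedRHS (ψ : V ⊗[R] A →ₗ[R] A ⊗[R] V)
    (σ : V ⊗[R] V →ₗ[R] A ⊗[R] V) : V ⊗[R] (V ⊗[R] A) →ₗ[R] A ⊗[R] V :=
  TensorProduct.map (LinearMap.mul' R A) LinearMap.id
    ∘ₗ (TensorProduct.assoc R A A V).symm.toLinearMap
    ∘ₗ LinearMap.lTensor A σ
    ∘ₗ (TensorProduct.assoc R A V V).toLinearMap
    ∘ₗ LinearMap.rTensor V ψ
    ∘ₗ (TensorProduct.assoc R V A V).symm.toLinearMap
    ∘ₗ LinearMap.lTensor V ψ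

/-- Cocycle condition LHS: (μ_A ⊗ V) ∘ (A ⊗ σ) ∘ (σ ⊗ V) : (V ⊗ V) ⊗ V → A ⊗ V. -/
noncomputable def cocycleLHS (σ : V ⊗[R] V →ₗ[R] A ⊗[R] V) :
    (V ⊗[R] V) ⊗[R] V →ₗ[R] A ⊗[R] V :=
  TensorProduct.map (LinearMap.mul' R A) LinearMap.id
    ∘ₗ (TensorProduct.assoc R A A V).symm.toLinearMap
    ∘ₗ LinearMap.lTensor A σ
    ∘ₗ (TensorProduct.assoc R A V V).toLinearMap
    ∘ₗ LinearMap.rTensor V σ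

/-- Cocycle condition RHS: (μ_A ⊗ V) ∘ (A ⊗ σ) ∘ (ψ ⊗ V) ∘ (V ⊗ σ) : V ⊗ (V ⊗ V) → A ⊗ V. -/
noncomputable def cocycleRHS (ψ : V ⊗[R] A →ₗ[R] A ⊗[R] V)
    (σ : V ⊗[R] V →ₗ[R] A ⊗[R] V) : V ⊗[R] (V ⊗[R] V) →ₗ[R] A ⊗[R] V :=
  TensorProduct.map (LinearMap.mul' R A) LinearMap.id
    ∘ₗ (TensorProduct.assoc R A A V).symm.toLinearMap
    ∘ₗ LinearMap.lTensor A σ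
    ∘ₗ (TensorProduct.assoc R A V V).toLinearMap
    ∘ₗ LinearMap.rTensor V ψ
    ∘ₗ (TensorProduct.assoc R V A V).symm.toLinearMap
    ∘ₗ LinearMap.lTensor V σ

/-- Auxiliary map V ⊗ (A ⊗ V) → A ⊗ V used in the weak crossed product. -/
noncomputable def wcpAux (ψ : V ⊗[R] A →ₗ[R] A ⊗[R] V)
    (σ : V ⊗[R] V →ₗ[R] A ⊗[R] V) : V ⊗[R] (A ⊗[R] V) →ₗ[R] A ⊗[R] V :=
  TensorProduct.map (LinearMap.mul' R A) LinearMap.id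
    ∘ₗ (TensorProduct.assoc R A A V).symm.toLinearMap
    ∘ₗ LinearMap.lTensor A σ
    ∘ₗ (TensorProduct.assoc R A V V).toLinearMap
    ∘ₗ LinearMap.rTensor V ψ
    ∘ₗ (TensorProduct.assoc R V A V).symm.toLinearMap

/-- The weak crossed product multiplication
μ_{A⊗V} = (μ_A ⊗ V) ∘ (μ_A ⊗ σ) ∘ (A ⊗ ψ ⊗ V) on A ⊗ V. -/
noncomputable def wcpMul (ψ : V ⊗[R] A →ₗ[R] A ⊗[R] V)
    (σ : V ⊗[R] V →ₗ[R] A ⊗[R] V) :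
    (A ⊗[R] V) ⊗[R] (A ⊗[R] V) →ₗ[R] A ⊗[R] V :=
  TensorProduct.map (LinearMap.mul' R A) LinearMap.id
    ∘ₗ (TensorProduct.assoc R A A V).symm.toLinearMap
    ∘ₗ LinearMap.lTensor A (wcpAux ψ σ)
    ∘ₗ (TensorProduct.assoc R A V (A ⊗[R] V)).toLinearMap

section WCPHelpers

variable (ψ : V ⊗[R] A →ₗ[R] A ⊗[R] V) (σ : V ⊗[R] V →ₗ[R] A ⊗[R] V)

/-- Curried σ-step: `Smap σ u (e ⊗ y) = (mulLeft e ⊗ id) (σ (y ⊗ u))`. -/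
noncomputable def Smap (u : V) : A ⊗[R] V →ₗ[R] A ⊗[R] V :=
  TensorProduct.map (LinearMap.mul' R A) LinearMap.id
    ∘ₗ (TensorProduct.assoc R A A V).symm.toLinearMap
    ∘ₗ LinearMap.lTensor A σ
    ∘ₗ (TensorProduct.assoc R A V V).toLinearMap
    ∘ₗ (TensorProduct.mk R (A ⊗[R] V) V).flip u

/-- Curried ψ-step: `Pmap ψ c (e ⊗ y) = (mulLeft e ⊗ id) (ψ (y ⊗ c))`. -/
noncomputable def Pmap (c : A) : A ⊗[R] V →ₗ[R] A ⊗[R] V :=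
  TensorProduct.map (LinearMap.mul' R A) LinearMap.id
    ∘ₗ (TensorProduct.assoc R A A V).symm.toLinearMap
    ∘ₗ LinearMap.lTensor A ψ
    ∘ₗ (TensorProduct.assoc R A V A).toLinearMap
    ∘ₗ (TensorProduct.mk R (A ⊗[R] V) A).flip c

/-- Right multiplication by `x` for `wcpMul`. -/
noncomputable def Tm (x : A ⊗[R] V) : A ⊗[R] V →ₗ[R] A ⊗[R] V :=
  wcpMul ψ σ ∘ₗ (TensorProduct.mk R (A ⊗[R] V) (A ⊗[R] V)).flip x

/-- `wcpAux` with first slot frozen. -/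
noncomputable def Wm (y : V) : A ⊗[R] V →ₗ[R] A ⊗[R] V :=
  wcpAux ψ σ ∘ₗ TensorProduct.mk R V (A ⊗[R] V) y

lemma Tm_def (x z : A ⊗[R] V) : Tm ψ σ x z = wcpMul ψ σ (z ⊗ₜ x) := rfl

lemma Wm_def (y : V) (x : A ⊗[R] V) : Wm ψ σ y x = wcpAux ψ σ (y ⊗ₜ x) := rfl

lemma mul_assoc_symm (e : A) (z : A ⊗[R] V) :
    TensorProduct.map (LinearMap.mul' R A) LinearMap.id
      ((TensorProduct.assoc R A A V).symm (e ⊗ₜ z)) =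
    LinearMap.rTensor V (LinearMap.mulLeft R e) z := by
  induction z using TensorProduct.induction_on with
  | zero => simp
  | tmul b w => simp [TensorProduct.assoc_symm_tmul]
  | add x y hx hy => simp [tmul_add, hx, hy]

lemma wcpMul_tmul (a : A) (v : V) (x : A ⊗[R] V) :
    wcpMul ψ σ ((a ⊗ₜ v) ⊗ₜ x) =
      LinearMap.rTensor V (LinearMap.mulLeft R a) (wcpAux ψ σ (v ⊗ₜ x)) := by
  simp [wcpMul, mul_assoc_symm]

lemma wcpAux_tmul (v : V) (b : A) (w : V) :
    wcpAux ψ σ (v ⊗ₜ (b ⊗ₜ w)) = Smap σ w (ψ (v ⊗ₜ b)) := by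
  simp [wcpAux, Smap, TensorProduct.assoc_symm_tmul]

lemma Smap_tmul (u : V) (e : A) (y : V) :
    Smap σ u (e ⊗ₜ y) =
      LinearMap.rTensor V (LinearMap.mulLeft R e) (σ (y ⊗ₜ u)) := by
  simp [Smap, mul_assoc_symm]

lemma Pmap_tmul (c : A) (e : A) (y : V) :
    Pmap ψ c (e ⊗ₜ y) =
      LinearMap.rTensor V (LinearMap.mulLeft R e) (ψ (y ⊗ₜ c)) := by
  simp [Pmap, mul_assoc_symm]

lemma Tm_tmul (x : A ⊗[R] V) (e : A) (y : V) :
    Tm ψ σ x (e ⊗ₜ y) =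
      LinearMap.rTensor V (LinearMap.mulLeft R e) (wcpAux ψ σ (y ⊗ₜ x)) := by
  rw [Tm_def, wcpMul_tmul]

lemma rTensor_mulLeft_mul (f e : A) (z : A ⊗[R] V) :
    LinearMap.rTensor V (LinearMap.mulLeft R (f * e)) z =
      LinearMap.rTensor V (LinearMap.mulLeft R f)
        (LinearMap.rTensor V (LinearMap.mulLeft R e) z) := by
  rw [LinearMap.mulLeft_mul, LinearMap.rTensor_comp, LinearMap.comp_apply]

lemma Smap_rTensor (u : V) (f : A) (z : A ⊗[R] V) :
    Smap σ u (LinearMap.rTensor V (LinearMap.mulLeft R f) z) =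
      LinearMap.rTensor V (LinearMap.mulLeft R f) (Smap σ u z) := by
  induction z using TensorProduct.induction_on with
  | zero => simp
  | tmul e y => rw [LinearMap.rTensor_tmul, LinearMap.mulLeft_apply,
      Smap_tmul, Smap_tmul, rTensor_mulLeft_mul]
  | add x y hx hy => simp [hx, hy]

lemma Tm_rTensor (x : A ⊗[R] V) (f : A) (z : A ⊗[R] V) :
    Tm ψ σ x (LinearMap.rTensor V (LinearMap.mulLeft R f) z) =
      LinearMap.rTensor V (LinearMap.mulLeft R f) (Tm ψ σ x z) := by
  induction z using TensorProduct.induction_on with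
  | zero => simp
  | tmul e y => rw [LinearMap.rTensor_tmul, LinearMap.mulLeft_apply,
      Tm_tmul, Tm_tmul, rTensor_mulLeft_mul]
  | add a b ha hb => simp [ha, hb]

lemma Tm_tmul_eq_comp (f : A) (z : V) :
    Tm ψ σ (f ⊗ₜ z) = Smap σ z ∘ₗ Pmap ψ f := by
  apply TensorProduct.ext'
  intro e y
  rw [LinearMap.comp_apply, Tm_tmul, wcpAux_tmul, Pmap_tmul, Smap_rTensor]

lemma psi_mul (hψ : psiMulLHS ψ = psiMulRHS ψ) (v : V) (b f : A) :
    ψ (v ⊗ₜ (b * f)) = Pmap ψ f (ψ (v ⊗ₜ b)) := by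
  have h := LinearMap.congr_fun hψ ((v ⊗ₜ b) ⊗ₜ f)
  rw [psiMulRHS, psiMulLHS] at h
  simpa [Pmap] using h.symm

lemma aux_rTensor (hψ : psiMulLHS ψ = psiMulRHS ψ) (v : V) (b : A)
    (x : A ⊗[R] V) :
    wcpAux ψ σ (v ⊗ₜ LinearMap.rTensor V (LinearMap.mulLeft R b) x) =
      Tm ψ σ x (ψ (v ⊗ₜ b)) := by
  induction x using TensorProduct.induction_on with
  | zero => simp [Tm_def]
  | tmul f z =>
      rw [LinearMap.rTensor_tmul, LinearMap.mulLeft_apply, wcpAux_tmul,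
        psi_mul ψ hψ, Tm_tmul_eq_comp, LinearMap.comp_apply]
  | add a b ha hb => simp only [map_add, tmul_add, ha, hb, Tm_def, map_add]

lemma twistedLHS_tmul (y w : V) (c : A) :
    twistedLHS ψ σ ((y ⊗ₜ w) ⊗ₜ c) = Pmap ψ c (σ (y ⊗ₜ w)) := by
  simp [twistedLHS, Pmap]

lemma twistedRHS_tmul (y w : V) (c : A) :
    twistedRHS ψ σ (y ⊗ₜ (w ⊗ₜ c)) = Wm ψ σ y (ψ (w ⊗ₜ c)) := by
  simp [twistedRHS, Wm, wcpAux]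

lemma cocycleLHS_tmul (y t u : V) :
    cocycleLHS σ ((y ⊗ₜ t) ⊗ₜ u) = Smap σ u (σ (y ⊗ₜ t)) := by
  simp [cocycleLHS, Smap]

lemma cocycleRHS_tmul (y t u : V) :
    cocycleRHS ψ σ (y ⊗ₜ (t ⊗ₜ u)) = wcpAux ψ σ (y ⊗ₜ σ (t ⊗ₜ u)) := by
  simp [cocycleRHS, wcpAux]

lemma cocycle_elem
    (hco : cocycleLHS σ =
      cocycleRHS ψ σ ∘ₗ (TensorProduct.assoc R V V V).toLinearMap)
    (y t u : V) :
    Smap σ u (σ (y ⊗ₜ t)) = wcpAux ψ σ (y ⊗ₜ σ (t ⊗ₜ u)) := by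
  have h := LinearMap.congr_fun hco ((y ⊗ₜ t) ⊗ₜ u)
  rw [cocycleLHS_tmul] at h
  rw [h, LinearMap.comp_apply, LinearEquiv.coe_coe, TensorProduct.assoc_tmul,
    cocycleRHS_tmul]

lemma Smap_Smap (hψ : psiMulLHS ψ = psiMulRHS ψ)
    (hco : cocycleLHS σ =
      cocycleRHS ψ σ ∘ₗ (TensorProduct.assoc R V V V).toLinearMap)
    (t u : V) :
    Smap σ u ∘ₗ Smap σ t = Tm ψ σ (σ (t ⊗ₜ u)) := by
  apply TensorProduct.ext'
  intro e y
  rw [LinearMap.comp_apply, Smap_tmul, Smap_rTensor,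
    cocycle_elem ψ σ hco, Tm_tmul]

lemma Smap_Wm (hψ : psiMulLHS ψ = psiMulRHS ψ)
    (hco : cocycleLHS σ =
      cocycleRHS ψ σ ∘ₗ (TensorProduct.assoc R V V V).toLinearMap)
    (u : V) (y : V) :
    Smap σ u ∘ₗ Wm ψ σ y = Wm ψ σ y ∘ₗ Smap σ u := by
  apply TensorProduct.ext'
  intro g t
  rw [LinearMap.comp_apply, LinearMap.comp_apply, Wm_def, wcpAux_tmul,
    ← LinearMap.comp_apply (Smap σ u) (Smap σ t), Smap_Smap ψ σ hψ hco,
    Smap_tmul, Wm_def, aux_rTensor ψ σ hψ]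

lemma Tm_Smap_sigma (hψ : psiMulLHS ψ = psiMulRHS ψ)
    (htw : twistedLHS ψ σ =
      twistedRHS ψ σ ∘ₗ (TensorProduct.assoc R V V A).toLinearMap)
    (hco : cocycleLHS σ =
      cocycleRHS ψ σ ∘ₗ (TensorProduct.assoc R V V V).toLinearMap)
    (y w : V) (c : A) (u : V) :
    Tm ψ σ (c ⊗ₜ u) (σ (y ⊗ₜ w)) =
      wcpAux ψ σ (y ⊗ₜ Smap σ u (ψ (w ⊗ₜ c))) := by
  have h := LinearMap.congr_fun htw ((y ⊗ₜ w) ⊗ₜ c)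
  rw [twistedLHS_tmul] at h
  rw [LinearMap.comp_apply, LinearEquiv.coe_coe, TensorProduct.assoc_tmul,
    twistedRHS_tmul] at h
  rw [Tm_tmul_eq_comp, LinearMap.comp_apply, h,
    ← LinearMap.comp_apply (Smap σ u) (Wm ψ σ y), Smap_Wm ψ σ hψ hco,
    LinearMap.comp_apply, Wm_def]

lemma Tm_Smap (hψ : psiMulLHS ψ = psiMulRHS ψ)
    (htw : twistedLHS ψ σ =
      twistedRHS ψ σ ∘ₗ (TensorProduct.assoc R V V A).toLinearMap)
    (hco : cocycleLHS σ =
      cocycleRHS ψ σ ∘ₗ (TensorProduct.assoc R V V V).toLinearMap)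
    (w : V) (c : A) (u : V) (z : A ⊗[R] V) :
    Tm ψ σ (c ⊗ₜ u) (Smap σ w z) = Tm ψ σ (Smap σ u (ψ (w ⊗ₜ c))) z := by
  induction z using TensorProduct.induction_on with
  | zero => simp [Tm_def]
  | tmul e y =>
      rw [Smap_tmul, Tm_rTensor, Tm_Smap_sigma ψ σ hψ htw hco, Tm_tmul]
  | add a b ha hb => simp only [map_add, ha, hb]

end WCPHelpers

/-- Under the twisted and cocycle conditions (and ∇ ∘ σ = σ) the weak crossed
product multiplication is associative. -/
theorem wcpMul_assoc (ψ : V ⊗[R] A →ₗ[R] A ⊗[R] V)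
    (σ : V ⊗[R] V →ₗ[R] A ⊗[R] V)
    (hψ : psiMulLHS ψ = psiMulRHS ψ)
    (htw : twistedLHS ψ σ =
      twistedRHS ψ σ ∘ₗ (TensorProduct.assoc R V V A).toLinearMap)
    (hco : cocycleLHS σ =
      cocycleRHS ψ σ ∘ₗ (TensorProduct.assoc R V V V).toLinearMap)
    (hσ : nabla ψ ∘ₗ σ = σ) :
    wcpMul ψ σ ∘ₗ LinearMap.rTensor (A ⊗[R] V) (wcpMul ψ σ) =
      wcpMul ψ σ ∘ₗ LinearMap.lTensor (A ⊗[R] V) (wcpMul ψ σ)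
        ∘ₗ (TensorProduct.assoc R (A ⊗[R] V) (A ⊗[R] V) (A ⊗[R] V)).toLinearMap := by
  
  apply TensorProduct.ext_threefold
  intro x y z
  induction x using TensorProduct.induction_on with
  | zero => simp
  | add a b ha hb => simp only [add_tmul, map_add, ha, hb]
  | tmul a v =>
  induction y using TensorProduct.induction_on with
  | zero => simp
  | add a b ha hb => simp only [add_tmul, tmul_add, map_add, ha, hb]
  | tmul b w =>
  induction z using TensorProduct.induction_on with
  | zero => simp
  | add a b ha hb => simp only [tmul_add, map_add, ha, hb]
  | tmul c u =>
  simp only [LinearMap.comp_apply, LinearMap.rTensor_tmul,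
    LinearMap.lTensor_tmul, LinearEquiv.coe_coe, TensorProduct.assoc_tmul]
  rw [wcpMul_tmul, wcpAux_tmul, ← Tm_def, Tm_rTensor,
    Tm_Smap ψ σ hψ htw hco,
    wcpMul_tmul, wcpMul_tmul, wcpAux_tmul, aux_rTensor ψ σ hψ]
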